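/- Let R = k[x,y,z], k a field of characteristic 0, and let I = (x^{β_{11}}y^{β_{12}}z^{β_{13}},...,x^{β_{m1}}y^{β_{m2}}z^{β_{m3}}) be a monomial ideal with √I = (xyz) (equivalently, every β_{ij} is positive). Then there exists a positive integer N such that the N-th differential power I^⟨N⟩ is a principal ideal; explicitly, one may take N = max(N_xy, N_yz, N_xz) where N_xy = β_xmax + β_ymax − β_xmin − β_ymin (and similarly for yz, xz), with β_xmax and β_xmin the maximum and minimum of the x-exponents among the generators, etc.; then I^⟨N⟩ = (x^{N−1+β_xmin} y^{N−1+β_ymin} z^{N−1+β_zmin}). -/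

import Mathlib

/-- `IsDiffOp A n φ` says that the `A`-linear endomorphism `φ` of `R` is an
`A`-linear differential operator of order at most `n`. -/
def IsDiffOp (A : Type*) {R : Type*} [CommRing A] [CommRing R] [Algebra A R] :
    ℕ → (R →ₗ[A] R) → Prop
  | 0 => fun φ => ∃ r : R, φ = LinearMap.mulLeft A r
  | n + 1 => fun φ => ∀ a : R,
      IsDiffOp A n (φ ∘ₗ LinearMap.mulLeft A a - LinearMap.mulLeft A a ∘ₗ φ)

theorem isDiffOp_comp_mulLeft (A : Type*) {R : Type*} [CommRing A] [CommRing R]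
    [Algebra A R] (x : R) (n : ℕ) :
    ∀ φ : R →ₗ[A] R, IsDiffOp A n φ → IsDiffOp A n (φ ∘ₗ LinearMap.mulLeft A x) := by
  induction n with
  | zero =>
    rintro φ ⟨r, rfl⟩
    exact ⟨r * x, by ext y; simp [mul_assoc]⟩
  | succ n ih =>
    intro φ h a
    have h2 := ih _ (h a)
    have key : (φ ∘ₗ LinearMap.mulLeft A x) ∘ₗ LinearMap.mulLeft A a -
        LinearMap.mulLeft A a ∘ₗ (φ ∘ₗ LinearMap.mulLeft A x) =
        (φ ∘ₗ LinearMap.mulLeft A a - LinearMap.mulLeft A a ∘ₗ φ) ∘ₗ LinearMap.mulLeft A x := by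
      ext y
      simp [mul_left_comm]
    rw [key]
    exact h2

/-- The `n`-th differential power of an ideal `I` of the `A`-algebra `R`:
the set of `r ∈ R` such that `∂ r ∈ I` for every `A`-linear differential
operator `∂` of order at most `n - 1`. -/
def diffPow (A : Type*) {R : Type*} [CommRing A] [CommRing R] [Algebra A R]
    (n : ℕ) (I : Ideal R) : Ideal R where
  carrier := {r | ∀ φ : R →ₗ[A] R, IsDiffOp A (n - 1) φ → φ r ∈ I}
  add_mem' := fun hx hy φ hφ => by simp [map_add]; exact I.add_mem (hx φ hφ) (hy φ hφ)
  zero_mem' := fun φ _ => by simpa using I.zero_mem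
  smul_mem' := fun c x hx => by
    intro φ hφ
    have := hx (φ ∘ₗ LinearMap.mulLeft A c) (isDiffOp_comp_mulLeft A c _ φ hφ)
    simpa [smul_eq_mul] using this

section DiffOpLemmas

variable {A R : Type*} [CommRing A] [CommRing R] [Algebra A R]

lemma mem_diffPow {n : ℕ} {I : Ideal R} {r : R} :
    r ∈ diffPow A n I ↔ ∀ φ : R →ₗ[A] R, IsDiffOp A (n - 1) φ → φ r ∈ I := Iff.rfl

lemma isDiffOp_add {n : ℕ} : ∀ {φ ψ : R →ₗ[A] R}, IsDiffOp A n φ → IsDiffOp A n ψ →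
    IsDiffOp A n (φ + ψ) := by
  induction n with
  | zero =>
    rintro φ ψ ⟨r, rfl⟩ ⟨s, rfl⟩
    exact ⟨r + s, by ext y; simp [add_mul]⟩
  | succ n ih =>
    intro φ ψ hφ hψ a
    have key : (φ + ψ) ∘ₗ LinearMap.mulLeft A a - LinearMap.mulLeft A a ∘ₗ (φ + ψ) =
        (φ ∘ₗ LinearMap.mulLeft A a - LinearMap.mulLeft A a ∘ₗ φ) +
        (ψ ∘ₗ LinearMap.mulLeft A a - LinearMap.mulLeft A a ∘ₗ ψ) := by
      ext y; simp; ring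
    rw [key]; exact ih (hφ a) (hψ a)

lemma isDiffOp_mulLeft_comp {n : ℕ} (r : R) : ∀ {φ : R →ₗ[A] R}, IsDiffOp A n φ →
    IsDiffOp A n (LinearMap.mulLeft A r ∘ₗ φ) := by
  induction n with
  | zero =>
    rintro φ ⟨s, rfl⟩
    exact ⟨r * s, by ext y; simp [mul_assoc]⟩
  | succ n ih =>
    intro φ hφ a
    have key : (LinearMap.mulLeft A r ∘ₗ φ) ∘ₗ LinearMap.mulLeft A a -
        LinearMap.mulLeft A a ∘ₗ (LinearMap.mulLeft A r ∘ₗ φ) =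
        LinearMap.mulLeft A r ∘ₗ (φ ∘ₗ LinearMap.mulLeft A a - LinearMap.mulLeft A a ∘ₗ φ) := by
      ext y; simp; ring
    rw [key]; exact ih (hφ a)

lemma isDiffOp_succ {n : ℕ} : ∀ {φ : R →ₗ[A] R}, IsDiffOp A n φ → IsDiffOp A (n + 1) φ := by
  induction n with
  | zero =>
    rintro φ ⟨r, rfl⟩ a
    exact ⟨0, by ext y; simp; ring⟩
  | succ n ih =>
    intro φ hφ a
    exact ih (hφ a)

lemma isDiffOp_mono {n n' : ℕ} (h : n ≤ n') {φ : R →ₗ[A] R} (hφ : IsDiffOp A n φ) :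
    IsDiffOp A n' φ := by
  induction n', h using Nat.le_induction with
  | base => exact hφ
  | succ n' _ ih => exact isDiffOp_succ ih

lemma isDiffOp_derivation_comp (D : Derivation A R R) {n : ℕ} :
    ∀ {φ : R →ₗ[A] R}, IsDiffOp A n φ → IsDiffOp A (n + 1) (D.toLinearMap ∘ₗ φ) := by
  induction n with
  | zero =>
    rintro φ ⟨r, rfl⟩ a
    refine ⟨r * D a, ?_⟩
    ext y
    simp [Derivation.leibniz, smul_eq_mul]
    ring
  | succ n ih =>
    intro φ hφ a
    have key : (D.toLinearMap ∘ₗ φ) ∘ₗ LinearMap.mulLeft A a -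
        LinearMap.mulLeft A a ∘ₗ (D.toLinearMap ∘ₗ φ) =
        D.toLinearMap ∘ₗ (φ ∘ₗ LinearMap.mulLeft A a - LinearMap.mulLeft A a ∘ₗ φ) +
        LinearMap.mulLeft A (D a) ∘ₗ φ := by
      ext y
      simp [Derivation.leibniz, smul_eq_mul]
      ring
    rw [key]
    exact isDiffOp_add (ih (hφ a)) (isDiffOp_mulLeft_comp _ hφ)

end DiffOpLemmas

section MvPoly

open MvPolynomial

variable {k : Type*} [CommRing k] {σ : Type*} [DecidableEq σ]

lemma isDiffOp_pderiv_pow (t : σ) (e : ℕ) :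
    IsDiffOp k e
      ((((MvPolynomial.pderiv t).toLinearMap : MvPolynomial σ k →ₗ[k] MvPolynomial σ k)) ^ e) := by
  induction e with
  | zero => exact ⟨1, by ext y; simp⟩
  | succ e ih =>
    rw [pow_succ', Module.End.mul_eq_comp]
    exact isDiffOp_derivation_comp _ ih

lemma pderivPow_monomial (t : σ) (e : ℕ) (c : σ →₀ ℕ) (r : k) :
    (((MvPolynomial.pderiv t).toLinearMap : MvPolynomial σ k →ₗ[k] MvPolynomial σ k) ^ e)
      (monomial c r) = monomial (c - Finsupp.single t e) (r * ((c t).descFactorial e : k)) := by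
  induction e generalizing c r with
  | zero => simp
  | succ e ih =>
    rw [pow_succ', Module.End.mul_apply, ih]
    rw [show (((MvPolynomial.pderiv t).toLinearMap : MvPolynomial σ k →ₗ[k] MvPolynomial σ k))
        ((monomial (c - Finsupp.single t e)) (r * ((c t).descFactorial e : k)))
      = (MvPolynomial.pderiv t) ((monomial (c - Finsupp.single t e))
        (r * ((c t).descFactorial e : k))) from rfl, MvPolynomial.pderiv_monomial]
    have h1 : c - Finsupp.single t e - Finsupp.single t 1 = c - Finsupp.single t (e + 1) := by
      rw [tsub_tsub, ← Finsupp.single_add]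
    have h2 : (c - Finsupp.single t e) t = c t - e := by
      simp [Finsupp.tsub_apply]
    rw [h1, h2, mul_assoc, ← Nat.cast_mul, mul_comm ((c t).descFactorial e) (c t - e),
      ← Nat.descFactorial_succ]

lemma coeff_pderivPow (f : MvPolynomial σ k) (t : σ) (e : ℕ) (c : σ →₀ ℕ) (he : e ≤ c t) :
    MvPolynomial.coeff (c - Finsupp.single t e)
      ((((MvPolynomial.pderiv t).toLinearMap : MvPolynomial σ k →ₗ[k] MvPolynomial σ k) ^ e) f)
      = f.coeff c * ((c t).descFactorial e : k) := by
  conv_lhs => rw [f.as_sum, map_sum]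
  rw [MvPolynomial.coeff_sum]
  simp only [pderivPow_monomial, MvPolynomial.coeff_monomial]
  rw [Finset.sum_eq_single c]
  · simp
  · intro c' _ hne
    split_ifs with h
    · rcases le_or_gt e (c' t) with h' | h'
      · exfalso
        apply hne
        ext u
        by_cases hu : u = t
        · subst hu
          have := congrArg (fun g => g u + e) h
          simp only [Finsupp.tsub_apply, Finsupp.single_eq_same] at this
          omega
        · have := congrArg (fun g => g u) h
          simp only [Finsupp.tsub_apply, Finsupp.single_eq_of_ne' (Ne.symm hu)] at this
          omega
      · rw [Nat.descFactorial_eq_zero_iff_lt.2 h']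
        simp
    · rfl
  · intro hc
    rw [MvPolynomial.notMem_support_iff.1 hc]
    simp

lemma mul_X_mem_span {T T' : Set (σ →₀ ℕ)} (i : σ)
    (hTT' : ∀ b ∈ T, b + Finsupp.single i 1 ∈ T') {g : MvPolynomial σ k}
    (hg : g ∈ Ideal.span ((fun s => monomial s (1 : k)) '' T)) :
    (X i : MvPolynomial σ k) * g ∈ Ideal.span ((fun s => monomial s (1 : k)) '' T') := by
  refine Submodule.span_induction ?_ ?_ ?_ ?_ hg
  · rintro _ ⟨b, hb, rfl⟩
    have : (X i : MvPolynomial σ k) * monomial b 1 = monomial (b + Finsupp.single i 1) 1 := by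
      rw [X, monomial_mul]
      simp [add_comm]
    rw [this]
    exact Ideal.subset_span ⟨_, hTT' b hb, rfl⟩
  · simp
  · intro x y _ _ hx hy
    rw [mul_add]; exact Ideal.add_mem _ hx hy
  · intro c x _ hx
    rw [smul_eq_mul, mul_left_comm]
    exact Ideal.mul_mem_left _ _ hx

/-- spanning set for where a diff op can send a monomial -/
def Sset (a : σ →₀ ℕ) (n : ℕ) : Set (σ →₀ ℕ) :=
  {b | b ≤ a ∧ (a.sum fun _ e => e) ≤ (b.sum fun _ e => e) + n}

lemma diffOp_monomial_mem (n : ℕ) :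
    ∀ (d : ℕ) (a : σ →₀ ℕ), (a.sum fun _ e => e) ≤ d → ∀ (r : k) (φ),
    IsDiffOp k n φ → φ (monomial a r) ∈
      Ideal.span ((fun s => monomial s (1 : k)) '' Sset a n) := by
  induction n with
  | zero =>
    rintro d a _ r φ ⟨r', rfl⟩
    have h1 : (monomial a (1 : k)) ∈ Ideal.span ((fun s => monomial s (1 : k)) '' Sset a 0) :=
      Ideal.subset_span ⟨a, ⟨le_refl a, le_refl _⟩, rfl⟩
    have : (LinearMap.mulLeft k r') (monomial a r) = (r' * C r) * monomial a 1 := by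
      simp [LinearMap.mulLeft_apply, mul_assoc, C_mul_monomial]
    rw [this]
    exact Ideal.mul_mem_left _ _ h1
  | succ n ihn =>
    have hile : ∀ (a : σ →₀ ℕ) (i : σ), a i ≤ a.sum fun _ e => e := by
      intro a i
      by_cases h : a i = 0
      · simp [h]
      · exact Finset.single_le_sum (f := fun x => a x) (fun _ _ => Nat.zero_le _)
          (Finsupp.mem_support_iff.2 h)
    intro d
    induction d with
    | zero =>
      intro a ha r φ hφ
      have ha0 : a = 0 := by
        ext u
        have := hile a u
        simp only [Finsupp.coe_zero, Pi.zero_apply]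
        omega
      subst ha0
      have h1 : (1 : MvPolynomial σ k) ∈
          Ideal.span ((fun s => monomial s (1 : k)) '' Sset 0 (n + 1)) :=
        Ideal.subset_span ⟨0, ⟨le_refl _, by simp⟩, by simp⟩
      rw [(Ideal.eq_top_iff_one _).2 h1]
      exact Submodule.mem_top
    | succ d ihd =>
      intro a ha r φ hφ
      rcases eq_or_ne a 0 with rfl | hne
      · have h1 : (1 : MvPolynomial σ k) ∈
            Ideal.span ((fun s => monomial s (1 : k)) '' Sset 0 (n + 1)) :=
          Ideal.subset_span ⟨0, ⟨le_refl _, by simp⟩, by simp⟩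
        rw [(Ideal.eq_top_iff_one _).2 h1]
        exact Submodule.mem_top
      · obtain ⟨i, hi⟩ := Finsupp.support_nonempty_iff.2 hne
        set a' := a - Finsupp.single i 1 with ha'def
        have hsle : Finsupp.single i 1 ≤ a := by
          rw [Finsupp.single_le_iff]
          exact Nat.one_le_iff_ne_zero.2 (Finsupp.mem_support_iff.1 hi)
        have haa : a' + Finsupp.single i 1 = a := tsub_add_cancel_of_le hsle
        have hsum : (a'.sum fun _ e => e) + 1 = a.sum fun _ e => e := by
          conv_rhs => rw [← haa]
          rw [Finsupp.sum_add_index' (fun _ => rfl) (fun _ _ _ => rfl),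
            Finsupp.sum_single_index rfl]
        have hmono : (monomial a r : MvPolynomial σ k) = X i * monomial a' r := by
          rw [← haa, add_comm, monomial_single_add, pow_one]
        have hdec : φ (monomial a r) =
            (φ ∘ₗ LinearMap.mulLeft k (X i) - LinearMap.mulLeft k (X i) ∘ₗ φ)
              (monomial a' r) + X i * φ (monomial a' r) := by
          rw [hmono]
          simp [LinearMap.sub_apply, LinearMap.comp_apply, LinearMap.mulLeft_apply]
        rw [hdec]
        have ha'le : a' ≤ a := tsub_le_self
        refine Ideal.add_mem _ ?_ ?_
        · have hmem := ihn d a' (by omega) r _ (hφ (X i))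
          refine Ideal.span_mono (Set.image_mono ?_) hmem
          intro b hb
          exact ⟨le_trans hb.1 ha'le, by have := hb.2; omega⟩
        · have hmem := ihd a' (by omega) r φ hφ
          refine mul_X_mem_span i ?_ hmem
          intro b hb
          refine ⟨?_, ?_⟩
          · rw [← haa]
            exact add_le_add hb.1 le_rfl
          · have hb2 := hb.2
            have : ((b + Finsupp.single i 1).sum fun _ e => e) = (b.sum fun _ e => e) + 1 := by
              rw [Finsupp.sum_add_index' (fun _ => rfl) (fun _ _ _ => rfl),
                Finsupp.sum_single_index rfl]
            omega

lemma prod_X_pow_univ {n : ℕ} (s : Fin n →₀ ℕ) :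
    (∏ t, (X t : MvPolynomial (Fin n) k) ^ s t) = monomial s 1 := by
  rw [← MvPolynomial.prod_X_pow_eq_monomial]
  exact (Finset.prod_subset (Finset.subset_univ _)
    (fun x _ hx => by rw [Finsupp.notMem_support_iff.1 hx, pow_zero])).symm

end MvPoly

lemma exists_fin3 (p : Fin 3 → Prop) (h : ∃ t, p t) : p 0 ∨ p 1 ∨ p 2 := by
  obtain ⟨t, ht⟩ := h
  fin_cases t <;> tauto

lemma combo {m : ℕ} (β : Fin (m + 1) → Fin 3 → ℕ) (βmax βmin : Fin 3 → ℕ)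
    (hub : ∀ j t, β j t ≤ βmax t) (hach : ∀ t, ∃ j, β j t = βmin t)
    (N M : ℕ) (hM : M = N - 1)
    (h01 : βmax 0 + βmax 1 - βmin 0 - βmin 1 ≤ N)
    (h12 : βmax 1 + βmax 2 - βmin 1 - βmin 2 ≤ N)
    (h02 : βmax 0 + βmax 2 - βmin 0 - βmin 2 ≤ N)
    (b : Fin 3 → ℕ) (hb : ∀ t, b t ≤ M + βmin t)
    (hsum : (M + βmin 0) + (M + βmin 1) + (M + βmin 2) ≤ b 0 + b 1 + b 2 + M) :
    ∃ j, ∀ t, β j t ≤ b t := by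
  obtain ⟨j0, hj0⟩ := hach 0
  obtain ⟨j1, hj1⟩ := hach 1
  obtain ⟨j2, hj2⟩ := hach 2
  by_contra h
  push_neg at h
  have d0 := exists_fin3 _ (h j0)
  have d1 := exists_fin3 _ (h j1)
  have d2 := exists_fin3 _ (h j2)
  have u00 := hub j0 0; have u01 := hub j0 1; have u02 := hub j0 2
  have u10 := hub j1 0; have u11 := hub j1 1; have u12 := hub j1 2
  have u20 := hub j2 0; have u21 := hub j2 1; have u22 := hub j2 2
  have hb0 := hb 0; have hb1 := hb 1; have hb2 := hb 2
  omega

open MvPolynomial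

/-- For a monomial ideal `I ⊆ k[x,y,z]` with `√I = (xyz)`, some differential power
of `I` is principal; explicitly `I^⟨N⟩ = (x^{N−1+β_xmin} y^{N−1+β_ymin} z^{N−1+β_zmin})`
with `N` as in the paper. -/
theorem diffPow_eventually_principal_threeVars {k : Type*} [Field k] [CharZero k]
    {m : ℕ} (β : Fin (m + 1) → Fin 3 → ℕ) (hpos : ∀ j t, 0 < β j t)
    (I : Ideal (MvPolynomial (Fin 3) k))
    (hI : I = Ideal.span (Set.range fun j : Fin (m + 1) =>
      ∏ t, (MvPolynomial.X t : MvPolynomial (Fin 3) k) ^ β j t))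
    (βmax βmin : Fin 3 → ℕ)
    (hmax : ∀ t, βmax t = Finset.univ.sup fun j => β j t)
    (hmin : ∀ t, βmin t = Finset.univ.inf' Finset.univ_nonempty fun j => β j t)
    (N : ℕ)
    (hN : N = max (βmax 0 + βmax 1 - βmin 0 - βmin 1)
        (max (βmax 1 + βmax 2 - βmin 1 - βmin 2) (βmax 0 + βmax 2 - βmin 0 - βmin 2))) :
    (∃ N' : ℕ, 0 < N' ∧ (diffPow k N' I).IsPrincipal) ∧
      diffPow k N I = Ideal.span
        {∏ t, (MvPolynomial.X t : MvPolynomial (Fin 3) k) ^ (N - 1 + βmin t)} := by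
  -- basic inequalities
  have hlb : ∀ j t, βmin t ≤ β j t := fun j t => by
    rw [hmin t]; exact Finset.inf'_le _ (Finset.mem_univ j)
  have hub : ∀ j t, β j t ≤ βmax t := fun j t => by
    rw [hmax t]; exact Finset.le_sup (f := fun j => β j t) (Finset.mem_univ j)
  have hach : ∀ t, ∃ j, β j t = βmin t := fun t => by
    obtain ⟨i, _, h⟩ := Finset.exists_mem_eq_inf'
      (s := (Finset.univ : Finset (Fin (m + 1)))) Finset.univ_nonempty (fun j => β j t)
    refine ⟨i, ?_⟩
    rw [hmin t]
    exact h.symm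
  have hminpos : ∀ t, 1 ≤ βmin t := fun t => by
    obtain ⟨j, hj⟩ := hach t; rw [← hj]; exact hpos j t
  have h01 : βmax 0 + βmax 1 - βmin 0 - βmin 1 ≤ N := hN ▸ le_max_left _ _
  have h12 : βmax 1 + βmax 2 - βmin 1 - βmin 2 ≤ N :=
    hN ▸ le_trans (le_max_left _ _) (le_max_right _ _)
  have h02 : βmax 0 + βmax 2 - βmin 0 - βmin 2 ≤ N :=
    hN ▸ le_trans (le_max_right _ _) (le_max_right _ _)
  -- finsupp versions
  set βF : Fin (m + 1) → (Fin 3 →₀ ℕ) :=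
    fun j => Finsupp.equivFunOnFinite.symm (β j) with hβF
  set aF : Fin 3 →₀ ℕ := Finsupp.equivFunOnFinite.symm (fun t => N - 1 + βmin t) with haF
  have hβFa : ∀ j t, βF j t = β j t := fun j t => rfl
  have haFa : ∀ t, aF t = N - 1 + βmin t := fun t => rfl
  have hIimg : I = Ideal.span ((fun s => monomial s (1 : k)) '' Set.range βF) := by
    have hfun : (fun j : Fin (m + 1) => ∏ t, (X t : MvPolynomial (Fin 3) k) ^ β j t) =
        ((fun s => monomial s (1 : k)) ∘ βF) := by
      funext j
      show _ = monomial (βF j) (1 : k)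
      rw [← prod_X_pow_univ (βF j)]
      rfl
    rw [hI, hfun, Set.range_comp]
  have hgen : (∏ t, (X t : MvPolynomial (Fin 3) k) ^ (N - 1 + βmin t)) = monomial aF 1 := by
    rw [← prod_X_pow_univ aF]
    rfl
  -- sums of finsupps over Fin 3
  have hsum3 : ∀ s : Fin 3 →₀ ℕ, (s.sum fun _ e => e) = s 0 + s 1 + s 2 := by
    intro s
    rw [Finsupp.sum_fintype _ _ (fun _ => rfl), Fin.sum_univ_three]
  -- the main equality
  have hmain : diffPow k N I = Ideal.span
      {∏ t, (MvPolynomial.X t : MvPolynomial (Fin 3) k) ^ (N - 1 + βmin t)} := by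
    apply le_antisymm
    · -- ⊆ : use partial derivatives
      intro f hf
      rw [hgen, ← Set.image_singleton (f := fun s => monomial s (1 : k)),
        mem_ideal_span_monomial_image]
      intro c hc
      refine ⟨aF, rfl, ?_⟩
      rw [Finsupp.le_def]
      intro t
      by_contra hlt
      push_neg at hlt
      rw [haFa t] at hlt
      set e : ℕ := c t + 1 - βmin t with he
      have hect : e ≤ c t := by have := hminpos t; omega
      have heM : e ≤ N - 1 := by omega
      have hop : IsDiffOp k (N - 1)
          ((((pderiv t).toLinearMap : MvPolynomial (Fin 3) k →ₗ[k] MvPolynomial (Fin 3) k)) ^ e) :=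
        isDiffOp_mono heM (isDiffOp_pderiv_pow t e)
      have hfI := hf _ hop
      rw [hIimg, mem_ideal_span_monomial_image] at hfI
      have hcoe : MvPolynomial.coeff (c - Finsupp.single t e)
          ((((pderiv t).toLinearMap : MvPolynomial (Fin 3) k →ₗ[k] MvPolynomial (Fin 3) k) ^ e) f)
          = f.coeff c * ((c t).descFactorial e : k) := coeff_pderivPow f t e c hect
      have hne : MvPolynomial.coeff (c - Finsupp.single t e)
          ((((pderiv t).toLinearMap : MvPolynomial (Fin 3) k →ₗ[k] MvPolynomial (Fin 3) k) ^ e) f)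
          ≠ 0 := by
        rw [hcoe]
        refine mul_ne_zero (MvPolynomial.mem_support_iff.1 hc) ?_
        rw [Nat.cast_ne_zero]
        intro h0
        exact absurd (Nat.descFactorial_eq_zero_iff_lt.1 h0) (not_lt.2 hect)
      obtain ⟨s, ⟨j, rfl⟩, hsle⟩ := hfI _ (MvPolynomial.mem_support_iff.2 hne)
      have h1 := hsle t
      rw [Finsupp.tsub_apply, Finsupp.single_eq_same, hβFa] at h1
      have h2 := hlb j t
      have h3 := hminpos t
      omega
    · -- ⊇ : the generator is in the differential power
      rw [hgen, Ideal.span_le, Set.singleton_subset_iff]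
      rw [SetLike.mem_coe, mem_diffPow]
      intro φ hφ
      have hspan := diffOp_monomial_mem (N - 1) (aF.sum fun _ e => e) aF le_rfl 1 φ hφ
      refine Ideal.span_le.2 ?_ hspan
      rintro _ ⟨b, ⟨hble, hbsum⟩, rfl⟩
      rw [Finsupp.le_def] at hble
      obtain ⟨j, hj⟩ := combo β βmax βmin hub hach N (N - 1) rfl h01 h12 h02 b
        (fun t => by have := hble t; rw [haFa t] at this; omega)
        (by
          rw [hsum3 aF, hsum3 b, haFa 0, haFa 1, haFa 2] at hbsum
          omega)
      have hβFle : βF j ≤ b := by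
        rw [Finsupp.le_def]; intro t; rw [hβFa]; exact hj t
      have hgenI : (monomial (βF j) (1 : k) : MvPolynomial (Fin 3) k) ∈ I := by
        rw [hIimg]
        exact Ideal.subset_span ⟨βF j, ⟨j, rfl⟩, rfl⟩
      have : (monomial b (1 : k) : MvPolynomial (Fin 3) k) =
          monomial (βF j) 1 * monomial (b - βF j) 1 := by
        rw [monomial_mul, one_mul, add_tsub_cancel_of_le hβFle]
      show (monomial b (1 : k) : MvPolynomial (Fin 3) k) ∈ I
      rw [this]
      exact Ideal.mul_mem_right _ _ hgenI
  refine ⟨?_, hmain⟩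
  rcases Nat.eq_zero_or_pos N with h0 | hposN
  · subst h0
    refine ⟨1, one_pos, ?_⟩
    rw [show diffPow k 1 I = diffPow k 0 I from rfl, hmain]
    exact ⟨⟨_, rfl⟩⟩
  · refine ⟨N, hposN, ?_⟩
    rw [hmain]
    exact ⟨⟨_, rfl⟩⟩
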